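/- Let (E₁,‖·‖₁) and (E₂,‖·‖₂) be random normed modules over K with base (Ω,𝓕,P), and let T : E₁ → E₂ be a K-linear operator. Then T is a.s. bounded (i.e., there exists ξ ∈ L⁰₊(𝓕) with ‖Tx‖₂ ≤ ξ·‖x‖₁ a.e. for all x ∈ E₁) if and only if T is a module homomorphism over L⁰(𝓕,K) and is continuous for the (ε,λ)-topologies, i.e., ‖xₙ − x‖₁ → 0 in probability P implies ‖Txₙ − Tx‖₂ → 0 in probability P. Moreover, in this case the a.e.-smallest ξ ∈ L⁰₊(𝓕) with ‖Tx‖₂ ≤ ξ‖x‖₁ a.e. for all x exists (denoted ‖T‖), and ‖T‖ is the a.e.-least upper bound of the family {‖Tx‖₂ : x ∈ E₁, ‖x‖₁ ≤ 1}, i.e., ‖Tx‖₂ ≤ ‖T‖ a.e. whenever ‖x‖₁ ≤ 1 a.e., and any η ∈ L⁰₊(𝓕) with ‖Tx‖₂ ≤ η a.e. for all x with ‖x‖₁ ≤ 1 a.e. satisfies ‖T‖ ≤ η a.e. -/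

import Mathlib

open MeasureTheory Filter Topology ENNReal

structure RNS (Ω K E₁ E₂ : Type*) [MeasurableSpace Ω] (P : Measure Ω) [RCLike K]
    [AddCommGroup E₁] [SMul (Ω →ₘ[P] K) E₁] [AddCommGroup E₂] [SMul (Ω →ₘ[P] K) E₂] where
  n₁ : E₁ → Ω →ₘ[P] ℝ
  n₂ : E₂ → Ω →ₘ[P] ℝ
  T : E₁ → E₂
  hmod₁a : ∀ (ξ : Ω →ₘ[P] K) (x y : E₁), ξ • (x + y) = ξ • x + ξ • y
  hmod₁b : ∀ (ξ η : Ω →ₘ[P] K) (x : E₁), (ξ + η) • x = ξ • x + η • x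
  hmod₁c : ∀ (ξ η : Ω →ₘ[P] K) (x : E₁), (ξ * η) • x = ξ • (η • x)
  hmod₁d : ∀ x : E₁, (1 : Ω →ₘ[P] K) • x = x
  hmod₂a : ∀ (ξ : Ω →ₘ[P] K) (x y : E₂), ξ • (x + y) = ξ • x + ξ • y
  hmod₂b : ∀ (ξ η : Ω →ₘ[P] K) (x : E₂), (ξ + η) • x = ξ • x + η • x
  hmod₂c : ∀ (ξ η : Ω →ₘ[P] K) (x : E₂), (ξ * η) • x = ξ • (η • x)
  hmod₂d : ∀ x : E₂, (1 : Ω →ₘ[P] K) • x = x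
  hn₁pos : ∀ x, ∀ᵐ ω ∂P, 0 ≤ n₁ x ω
  hn₁def : ∀ x, (∀ᵐ ω ∂P, n₁ x ω = 0) → x = 0
  hn₁tri : ∀ x y, ∀ᵐ ω ∂P, n₁ (x + y) ω ≤ n₁ x ω + n₁ y ω
  hn₁hom : ∀ (ξ : Ω →ₘ[P] K) (x : E₁), ∀ᵐ ω ∂P, n₁ (ξ • x) ω = ‖ξ ω‖ * n₁ x ω
  hn₂pos : ∀ x, ∀ᵐ ω ∂P, 0 ≤ n₂ x ω
  hn₂def : ∀ x, (∀ᵐ ω ∂P, n₂ x ω = 0) → x = 0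
  hn₂tri : ∀ x y, ∀ᵐ ω ∂P, n₂ (x + y) ω ≤ n₂ x ω + n₂ y ω
  hn₂hom : ∀ (ξ : Ω →ₘ[P] K) (x : E₂), ∀ᵐ ω ∂P, n₂ (ξ • x) ω = ‖ξ ω‖ * n₂ x ω
  hT_add : ∀ x y, T (x + y) = T x + T y
  hT_smul : ∀ (c : K) (x : E₁),
      T ((AEEqFun.const Ω c : Ω →ₘ[P] K) • x) = (AEEqFun.const Ω c : Ω →ₘ[P] K) • T x

namespace RNS
variable {Ω K E₁ E₂ : Type*} [MeasurableSpace Ω] {P : Measure Ω} [IsProbabilityMeasure P]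
  [RCLike K] [AddCommGroup E₁] [SMul (Ω →ₘ[P] K) E₁] [AddCommGroup E₂] [SMul (Ω →ₘ[P] K) E₂]


set_option linter.unusedSectionVars false

theorem zero_smul₁ (S : RNS Ω K E₁ E₂ P) (x : E₁) : (0 : Ω →ₘ[P] K) • x = 0 := by
  have h := S.hmod₁b 0 0 x
  rw [add_zero] at h
  exact (left_eq_add.mp h)

theorem zero_smul₂ (S : RNS Ω K E₁ E₂ P) (x : E₂) : (0 : Ω →ₘ[P] K) • x = 0 := by
  have h := S.hmod₂b 0 0 x
  rw [add_zero] at h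
  exact (left_eq_add.mp h)

theorem smul_zero₂ (S : RNS Ω K E₁ E₂ P) (ξ : Ω →ₘ[P] K) : ξ • (0 : E₂) = 0 := by
  have h := S.hmod₂a ξ 0 0
  rw [add_zero] at h
  exact (left_eq_add.mp h)

theorem neg_smul₁ (S : RNS Ω K E₁ E₂ P) (ξ : Ω →ₘ[P] K) (x : E₁) : (-ξ) • x = -(ξ • x) := by
  have h := S.hmod₁b ξ (-ξ) x
  rw [add_neg_cancel, S.zero_smul₁] at h
  exact eq_neg_of_add_eq_zero_right h.symm

theorem neg_smul₂ (S : RNS Ω K E₁ E₂ P) (ξ : Ω →ₘ[P] K) (x : E₂) : (-ξ) • x = -(ξ • x) := by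
  have h := S.hmod₂b ξ (-ξ) x
  rw [add_neg_cancel, S.zero_smul₂] at h
  exact eq_neg_of_add_eq_zero_right h.symm

theorem sub_smul₁ (S : RNS Ω K E₁ E₂ P) (ξ η : Ω →ₘ[P] K) (x : E₁) : (ξ - η) • x = ξ • x - η • x := by
  rw [sub_eq_add_neg, S.hmod₁b, S.neg_smul₁, sub_eq_add_neg]

theorem sub_smul₂ (S : RNS Ω K E₁ E₂ P) (ξ η : Ω →ₘ[P] K) (x : E₂) : (ξ - η) • x = ξ • x - η • x := by
  rw [sub_eq_add_neg, S.hmod₂b, S.neg_smul₂, sub_eq_add_neg]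

theorem T_zero (S : RNS Ω K E₁ E₂ P) : S.T 0 = 0 := by
  have h := S.hT_add 0 0
  rw [add_zero] at h
  exact (left_eq_add.mp h)

theorem T_neg (S : RNS Ω K E₁ E₂ P) (x : E₁) : S.T (-x) = -S.T x := by
  have h := S.hT_add x (-x)
  rw [add_neg_cancel, S.T_zero] at h
  exact eq_neg_of_add_eq_zero_right h.symm

theorem T_sub (S : RNS Ω K E₁ E₂ P) (x y : E₁) : S.T (x - y) = S.T x - S.T y := by
  rw [sub_eq_add_neg, S.hT_add, S.T_neg, sub_eq_add_neg]

theorem n₁_zero (S : RNS Ω K E₁ E₂ P) : ∀ᵐ ω ∂P, S.n₁ (0 : E₁) ω = 0 := by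
  have h := S.hn₁hom 0 0
  rw [S.zero_smul₁] at h
  filter_upwards [h, AEEqFun.coeFn_zero (β := K) (μ := P)] with ω h1 h2
  rw [h1, h2]
  simp

theorem n₂_zero (S : RNS Ω K E₁ E₂ P) : ∀ᵐ ω ∂P, S.n₂ (0 : E₂) ω = 0 := by
  have h := S.hn₂hom 0 0
  rw [S.smul_zero₂] at h
  filter_upwards [h, AEEqFun.coeFn_zero (β := K) (μ := P)] with ω h1 h2
  rw [h1, h2]
  simp
variable {Ω K E₁ E₂ : Type*} [MeasurableSpace Ω] {P : Measure Ω} [IsProbabilityMeasure P]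
  [RCLike K] [AddCommGroup E₁] [SMul (Ω →ₘ[P] K) E₁] [AddCommGroup E₂] [SMul (Ω →ₘ[P] K) E₂]
set_option linter.unusedSectionVars false

/-- Indicator function of a measurable set as an element of `L⁰(K)`. -/
noncomputable def chi (P : Measure Ω) (K : Type*) [RCLike K] {A : Set Ω} (hA : MeasurableSet A) :
    Ω →ₘ[P] K :=
  AEEqFun.mk (A.indicator fun _ => (1 : K))
    ((measurable_const.indicator hA).aestronglyMeasurable)

theorem coeFn_chi {K : Type*} [RCLike K] {A : Set Ω} (hA : MeasurableSet A) :
    ⇑(chi P K hA) =ᵐ[P] A.indicator fun _ => (1 : K) := AEEqFun.coeFn_mk _ _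

theorem chi_add_compl {A : Set Ω} (hA : MeasurableSet A) :
    chi P K hA + (1 - chi P K hA) = 1 := by abel

theorem chi_mul_chi {A : Set Ω} (hA : MeasurableSet A) :
    chi P K hA * chi P K hA = chi P K hA := by
  apply AEEqFun.ext
  filter_upwards [AEEqFun.coeFn_mul (chi P K hA) (chi P K hA), coeFn_chi (K := K) hA] with ω h1 h2
  simp only [h1, Pi.mul_apply, h2]
  by_cases hω : ω ∈ A
  · simp [Set.indicator_of_mem hω]
  · simp [Set.indicator_of_notMem hω]

theorem chi_mul_compl {A : Set Ω} (hA : MeasurableSet A) :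
    chi P K hA * (1 - chi P K hA) = 0 := by
  apply AEEqFun.ext
  filter_upwards [AEEqFun.coeFn_mul (chi P K hA) (1 - chi P K hA), coeFn_chi (K := K) hA,
    AEEqFun.coeFn_sub (1 : Ω →ₘ[P] K) (chi P K hA), AEEqFun.coeFn_one (β := K) (μ := P),
    AEEqFun.coeFn_zero (β := K) (μ := P)] with ω h1 h2 h3 h4 h5
  simp only [h1, Pi.mul_apply, h2, h3, Pi.sub_apply, h4, h5, Pi.one_apply]
  by_cases hω : ω ∈ A
  · simp [Set.indicator_of_mem hω]
  · simp [Set.indicator_of_notMem hω]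

theorem T_chi_smul (S : RNS Ω K E₁ E₂ P) {ξ : Ω →ₘ[P] ℝ} (hξ0 : ∀ᵐ ω ∂P, 0 ≤ ξ ω)
    (hξ : ∀ x, ∀ᵐ ω ∂P, S.n₂ (S.T x) ω ≤ ξ ω * S.n₁ x ω)
    {A : Set Ω} (hA : MeasurableSet A) (x : E₁) :
    S.T (chi P K hA • x) = chi P K hA • S.T x := by
  set χ : Ω →ₘ[P] K := chi P K hA with hχ
  set χ' : Ω →ₘ[P] K := 1 - chi P K hA with hχ'
  have hχ'c : ⇑χ' =ᵐ[P] fun ω => 1 - (A.indicator (fun _ => (1:K)) ω) := by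
    filter_upwards [AEEqFun.coeFn_sub (1 : Ω →ₘ[P] K) χ, AEEqFun.coeFn_one (β := K) (μ := P),
      coeFn_chi (K := K) hA] with ω h1 h2 h3
    rw [hχ] at h1
    simp only [hχ', h1, Pi.sub_apply, h2, Pi.one_apply, h3]
  -- the image of the indicator-truncated vector has norm vanishing off A
  have h1 : ∀ᵐ ω ∂P, ω ∉ A → S.n₂ (S.T (χ • x)) ω = 0 := by
    filter_upwards [hξ (χ • x), S.hn₁hom χ x, S.hn₂pos (S.T (χ • x)), coeFn_chi (K := K) hA,
      hξ0] with ω a b c d e hω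
    have hn : ‖(χ : Ω → K) ω‖ = 0 := by rw [d, Set.indicator_of_notMem hω, norm_zero]
    rw [b, hn, zero_mul, mul_zero] at a
    exact le_antisymm a c
  have h1' : ∀ᵐ ω ∂P, ω ∈ A → S.n₂ (S.T (χ' • x)) ω = 0 := by
    filter_upwards [hξ (χ' • x), S.hn₁hom χ' x, S.hn₂pos (S.T (χ' • x)), hχ'c, hξ0]
      with ω a b c d e hω
    have hn : ‖(χ' : Ω → K) ω‖ = 0 := by
      rw [d, Set.indicator_of_mem hω, sub_self, norm_zero]
    rw [b, hn, zero_mul, mul_zero] at a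
    exact le_antisymm a c
  have h2 : χ' • S.T (χ • x) = 0 := by
    apply S.hn₂def
    filter_upwards [S.hn₂hom χ' (S.T (χ • x)), h1, hχ'c] with ω a b c
    by_cases hω : ω ∈ A
    · rw [a, c, Set.indicator_of_mem hω, sub_self, norm_zero, zero_mul]
    · rw [a, b hω, mul_zero]
  have h5 : χ • S.T (χ' • x) = 0 := by
    apply S.hn₂def
    filter_upwards [S.hn₂hom χ (S.T (χ' • x)), h1', coeFn_chi (K := K) hA] with ω a b c
    by_cases hω : ω ∈ A
    · rw [a, b hω, mul_zero]
    · rw [a, c, Set.indicator_of_notMem hω, norm_zero, zero_mul]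
  have hsum : χ + χ' = 1 := by rw [hχ, hχ']; abel
  have h3 : S.T (χ • x) = χ • S.T (χ • x) := by
    calc S.T (χ • x) = (χ + χ') • S.T (χ • x) := by rw [hsum, S.hmod₂d]
    _ = χ • S.T (χ • x) + χ' • S.T (χ • x) := S.hmod₂b χ χ' _
    _ = χ • S.T (χ • x) := by rw [h2, add_zero]
  have hx : x = χ • x + χ' • x := by rw [← S.hmod₁b, hsum, S.hmod₁d]
  have hTx : S.T x = S.T (χ • x) + S.T (χ' • x) := by
    nth_rewrite 1 [hx]
    exact S.hT_add _ _
  symm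
  calc χ • S.T x = χ • S.T (χ • x) + χ • S.T (χ' • x) := by rw [hTx, S.hmod₂a]
  _ = χ • S.T (χ • x) := by rw [h5, add_zero]
  _ = S.T (χ • x) := h3.symm


theorem T_simple_smul (S : RNS Ω K E₁ E₂ P) {ξ : Ω →ₘ[P] ℝ} (hξ0 : ∀ᵐ ω ∂P, 0 ≤ ξ ω)
    (hξ : ∀ x, ∀ᵐ ω ∂P, S.n₂ (S.T x) ω ≤ ξ ω * S.n₁ x ω) (f : SimpleFunc Ω K) :
    ∀ x : E₁, S.T ((AEEqFun.mk ⇑f f.aestronglyMeasurable : Ω →ₘ[P] K) • x)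
      = (AEEqFun.mk ⇑f f.aestronglyMeasurable : Ω →ₘ[P] K) • S.T x := by
  induction f using SimpleFunc.induction with
  | @const c s hs =>
    intro x
    have hmk : (AEEqFun.mk ⇑(SimpleFunc.piecewise s hs (SimpleFunc.const Ω c)
        (SimpleFunc.const Ω 0)) (SimpleFunc.aestronglyMeasurable _) : Ω →ₘ[P] K)
        = (AEEqFun.const Ω c : Ω →ₘ[P] K) * chi P K hs := by
      apply AEEqFun.ext
      filter_upwards [AEEqFun.coeFn_mk (μ := P) ⇑(SimpleFunc.piecewise s hs
          (SimpleFunc.const Ω c) (SimpleFunc.const Ω 0)) (SimpleFunc.aestronglyMeasurable _),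
        AEEqFun.coeFn_mul (AEEqFun.const Ω c : Ω →ₘ[P] K) (chi P K hs),
        AEEqFun.coeFn_const Ω c, coeFn_chi (K := K) hs] with ω h1 h2 h3 h4
      rw [h1, h2, Pi.mul_apply, h3, h4]
      by_cases hω : ω ∈ s
      · simp [SimpleFunc.piecewise_apply, hω, Set.indicator_of_mem hω]
      · simp [SimpleFunc.piecewise_apply, hω, Set.indicator_of_notMem hω]
    rw [hmk, S.hmod₁c, S.hT_smul, S.T_chi_smul hξ0 hξ, ← S.hmod₂c]
  | @add f g hdisj hf hg =>
    intro x
    have hmk : (AEEqFun.mk ⇑(f + g) (SimpleFunc.aestronglyMeasurable _) : Ω →ₘ[P] K)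
        = AEEqFun.mk ⇑f f.aestronglyMeasurable + AEEqFun.mk ⇑g g.aestronglyMeasurable := by
      apply AEEqFun.ext
      filter_upwards [AEEqFun.coeFn_mk _ (SimpleFunc.aestronglyMeasurable (f + g)),
        AEEqFun.coeFn_add (AEEqFun.mk ⇑f f.aestronglyMeasurable : Ω →ₘ[P] K)
          (AEEqFun.mk ⇑g g.aestronglyMeasurable),
        AEEqFun.coeFn_mk ⇑f f.aestronglyMeasurable,
        AEEqFun.coeFn_mk ⇑g g.aestronglyMeasurable] with ω h1 h2 h3 h4
      rw [h1, h2, Pi.add_apply, h3, h4, SimpleFunc.coe_add, Pi.add_apply]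
    rw [hmk, S.hmod₁b, S.hT_add, hf, hg, S.hmod₂b]

/-- An a.s. bounded `K`-linear map is a module homomorphism. -/
theorem hom_of_bound (S : RNS Ω K E₁ E₂ P) {ξ : Ω →ₘ[P] ℝ} (hξ0 : ∀ᵐ ω ∂P, 0 ≤ ξ ω)
    (hξ : ∀ x, ∀ᵐ ω ∂P, S.n₂ (S.T x) ω ≤ ξ ω * S.n₁ x ω) (c : Ω →ₘ[P] K) (x : E₁) :
    S.T (c • x) = c • S.T x := by
  have hsm := c.aestronglyMeasurable
  set g : Ω → K := hsm.mk c with hgdef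
  have hgm : StronglyMeasurable g := hsm.stronglyMeasurable_mk
  have hcg : ⇑c =ᵐ[P] g := hsm.ae_eq_mk
  set s : ℕ → SimpleFunc Ω K := fun n => hgm.approx n with hsdef
  set Sn : ℕ → Ω →ₘ[P] K := fun n => AEEqFun.mk ⇑(s n) (s n).aestronglyMeasurable with hSndef
  have hsimple : ∀ n, S.T (Sn n • x) = Sn n • S.T x := fun n => S.T_simple_smul hξ0 hξ (s n) x
  have hDn : ∀ n, ∀ᵐ ω ∂P, S.n₂ (S.T (c • x) - c • S.T x) ω
      ≤ ‖g ω - s n ω‖ * (ξ ω * S.n₁ x ω) + ‖g ω - s n ω‖ * S.n₂ (S.T x) ω := by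
    intro n
    have e1 : S.T (c • x) - c • S.T x = S.T ((c - Sn n) • x) + (Sn n - c) • S.T x := by
      rw [S.sub_smul₁, S.T_sub, hsimple, S.sub_smul₂]
      abel
    filter_upwards [S.hn₂tri (S.T ((c - Sn n) • x)) ((Sn n - c) • S.T x), hξ ((c - Sn n) • x),
      S.hn₁hom (c - Sn n) x, S.hn₂hom (Sn n - c) (S.T x), AEEqFun.coeFn_sub c (Sn n),
      AEEqFun.coeFn_sub (Sn n) c, AEEqFun.coeFn_mk ⇑(s n) (s n).aestronglyMeasurable, hcg,
      hξ0, S.hn₁pos x] with ω htri hb hh1 hh2 hs1 hs2 hmk hc hx0 hn1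
    rw [e1]
    have hd1 : (c - Sn n : Ω →ₘ[P] K) ω = g ω - s n ω := by
      rw [hs1, Pi.sub_apply, hc, hmk]
    have hd2 : (Sn n - c : Ω →ₘ[P] K) ω = s n ω - g ω := by
      rw [hs2, Pi.sub_apply, hc, hmk]
    rw [hh1, hd1] at hb
    rw [hd2, norm_sub_rev] at hh2
    have hring : ξ ω * (‖g ω - s n ω‖ * S.n₁ x ω) = ‖g ω - s n ω‖ * (ξ ω * S.n₁ x ω) := by ring
    refine htri.trans ?_
    rw [hh2]
    exact add_le_add (hb.trans_eq hring) le_rfl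
  have h0 : ∀ᵐ ω ∂P, S.n₂ (S.T (c • x) - c • S.T x) ω = 0 := by
    filter_upwards [ae_all_iff.mpr hDn, S.hn₂pos (S.T (c • x) - c • S.T x)] with ω h hpos
    have hten0 : Tendsto (fun n => ‖g ω - s n ω‖) atTop (𝓝 0) := by
      have h1 := tendsto_const_nhds (x := g ω) (f := atTop (α := ℕ))
      have h2 := (h1.sub (hgm.tendsto_approx ω)).norm
      simpa using h2
    have hten : Tendsto (fun n => ‖g ω - s n ω‖ * (ξ ω * S.n₁ x ω)
        + ‖g ω - s n ω‖ * S.n₂ (S.T x) ω) atTop (𝓝 0) := by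
      have := (hten0.mul_const (ξ ω * S.n₁ x ω)).add (hten0.mul_const (S.n₂ (S.T x) ω))
      simpa using this
    exact le_antisymm (ge_of_tendsto' hten h) hpos
  have hD0 : S.T (c • x) - c • S.T x = 0 := S.hn₂def _ h0
  exact sub_eq_zero.mp hD0


/-- An a.s. bounded operator is continuous in probability. -/
theorem cont_of_bound (S : RNS Ω K E₁ E₂ P) {ξ : Ω →ₘ[P] ℝ} (hξ0 : ∀ᵐ ω ∂P, 0 ≤ ξ ω)
    (hξ : ∀ x, ∀ᵐ ω ∂P, S.n₂ (S.T x) ω ≤ ξ ω * S.n₁ x ω) (x : ℕ → E₁) (x₀ : E₁)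
    (hconv : TendstoInMeasure P (fun n ω => S.n₁ (x n - x₀) ω) atTop (fun _ => (0 : ℝ))) :
    TendstoInMeasure P (fun n ω => S.n₂ (S.T (x n) - S.T x₀) ω) atTop (fun _ => (0 : ℝ)) := by
  have hrw : ∀ n, S.T (x n) - S.T x₀ = S.T (x n - x₀) := fun n => (S.T_sub _ _).symm
  simp only [hrw]
  rw [tendstoInMeasure_iff_dist]
  intro ε hε
  rw [ENNReal.tendsto_atTop_zero]
  intro δ hδ
  -- find a level M beyond which ξ is small in probability
  have hbm := ξ.aestronglyMeasurable
  set ξm : Ω → ℝ := hbm.mk ξ with hξmdef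
  have hξm_meas : StronglyMeasurable ξm := hbm.stronglyMeasurable_mk
  have hae : ⇑ξ =ᵐ[P] ξm := hbm.ae_eq_mk
  have hempty : (⋂ M : ℕ, {ω | (M : ℝ) ≤ ξm ω}) = ∅ := by
    ext ω
    simp only [Set.mem_iInter, Set.mem_setOf_eq, Set.mem_empty_iff_false, iff_false, not_forall]
    obtain ⟨M, hM⟩ := exists_nat_gt (ξm ω)
    exact ⟨M, not_le.mpr hM⟩
  have hset : Tendsto (fun M : ℕ => P {ω | (M : ℝ) ≤ ξm ω}) atTop (𝓝 0) := by
    have h := tendsto_measure_iInter_atTop (μ := P)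
      (s := fun M : ℕ => {ω | (M : ℝ) ≤ ξm ω})
      (fun M => (measurableSet_le measurable_const hξm_meas.measurable).nullMeasurableSet)
      (fun i j hij ω (h : (j : ℝ) ≤ ξm ω) => le_trans (Nat.cast_le.mpr hij) h)
      ⟨0, measure_ne_top P _⟩
    rw [hempty] at h
    simpa [Function.comp_def] using h
  obtain ⟨M, hM⟩ := (ENNReal.tendsto_atTop_zero.mp hset) (δ / 2) (ENNReal.half_pos hδ.ne')
  have hMle := hM M le_rfl
  set M' : ℝ := (M : ℝ) + 1 with hM'def
  have hM'pos : (0 : ℝ) < M' := by positivity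
  obtain ⟨N, hN⟩ := (ENNReal.tendsto_atTop_zero.mp ((tendstoInMeasure_iff_dist.mp hconv) (ε / M') (div_pos hε hM'pos)))
    (δ / 2) (ENNReal.half_pos hδ.ne')
  refine ⟨N, fun n hn => ?_⟩
  have hle : {ω | ε ≤ dist (S.n₂ (S.T (x n - x₀)) ω) ((fun _ => (0:ℝ)) ω)}
      ≤ᵐ[P] (({ω | (M : ℝ) ≤ ξm ω}
        ∪ {ω | ε / M' ≤ dist (S.n₁ (x n - x₀) ω) ((fun _ => (0:ℝ)) ω)} : Set Ω)) := by
    filter_upwards [hξ (x n - x₀), S.hn₂pos (S.T (x n - x₀)), S.hn₁pos (x n - x₀), hae]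
      with ω h1 h2 h3 h4 hmem
    simp only [Set.mem_setOf_eq, Set.mem_union, Real.dist_eq, sub_zero] at hmem ⊢
    by_cases hΜ : (M : ℝ) ≤ ξm ω
    · exact Or.inl hΜ
    · refine Or.inr ?_
      have hξω : ξ ω ≤ M' := by
        rw [h4]
        have := not_le.mp hΜ
        simp only [hM'def]
        linarith
      have hmem' : ε ≤ S.n₂ (S.T (x n - x₀)) ω := by
        have hmem'' : ε ≤ |S.n₂ (S.T (x n - x₀)) ω| := hmem
        rwa [abs_of_nonneg h2] at hmem''
      have h6 : ε ≤ M' * S.n₁ (x n - x₀) ω :=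
        hmem'.trans (h1.trans (mul_le_mul_of_nonneg_right hξω h3))
      have h7 : ε / M' ≤ S.n₁ (x n - x₀) ω :=
        (div_le_iff₀ hM'pos).mpr (by linarith [mul_comm M' (S.n₁ (x n - x₀) ω)])
      exact h7.trans (le_abs_self _)
  calc P {ω | ε ≤ dist (S.n₂ (S.T (x n - x₀)) ω) ((fun _ => (0:ℝ)) ω)}
      ≤ P (({ω | (M : ℝ) ≤ ξm ω}
        ∪ {ω | ε / M' ≤ dist (S.n₁ (x n - x₀) ω) ((fun _ => (0:ℝ)) ω)} : Set Ω)) :=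
        measure_mono_ae hle
  _ ≤ P {ω | (M : ℝ) ≤ ξm ω}
      + P {ω | ε / M' ≤ dist (S.n₁ (x n - x₀) ω) ((fun _ => (0:ℝ)) ω)} := measure_union_le _ _
  _ ≤ δ / 2 + δ / 2 := add_le_add hMle (hN n hn)
  _ = δ := ENNReal.add_halves δ


theorem chi_compl_mul_compl {A : Set Ω} (hA : MeasurableSet A) :
    ((1 : Ω →ₘ[P] K) - chi P K hA) * (1 - chi P K hA) = 1 - chi P K hA := by
  apply AEEqFun.ext
  filter_upwards [AEEqFun.coeFn_mul ((1 : Ω →ₘ[P] K) - chi P K hA) (1 - chi P K hA),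
    AEEqFun.coeFn_sub (1 : Ω →ₘ[P] K) (chi P K hA), AEEqFun.coeFn_one (β := K) (μ := P),
    coeFn_chi (K := K) hA] with ω h1 h2 h3 h4
  simp only [h1, Pi.mul_apply, h2, Pi.sub_apply, h3, Pi.one_apply, h4]
  by_cases hω : ω ∈ A
  · simp [Set.indicator_of_mem hω]
  · simp [Set.indicator_of_notMem hω]

/-- The gluing construction: combining two vectors along a measurable set on which the first
has larger image norm. -/
theorem glue (S : RNS Ω K E₁ E₂ P)
    (Hhom : ∀ (c : Ω →ₘ[P] K) (x : E₁), S.T (c • x) = c • S.T x) (a b : E₁) :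
    ∃ z : E₁, (∀ᵐ ω ∂P, S.n₁ z ω ≤ max (S.n₁ a ω) (S.n₁ b ω)) ∧
      (∀ᵐ ω ∂P, S.n₂ (S.T z) ω = max (S.n₂ (S.T a) ω) (S.n₂ (S.T b) ω)) := by
  have hu := (S.n₂ (S.T a)).aestronglyMeasurable
  have hv := (S.n₂ (S.T b)).aestronglyMeasurable
  set um : Ω → ℝ := hu.mk _ with humdef
  set vm : Ω → ℝ := hv.mk _ with hvmdef
  have hueq : ⇑(S.n₂ (S.T a)) =ᵐ[P] um := hu.ae_eq_mk
  have hveq : ⇑(S.n₂ (S.T b)) =ᵐ[P] vm := hv.ae_eq_mk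
  have hA : MeasurableSet {ω | vm ω ≤ um ω} :=
    measurableSet_le hv.stronglyMeasurable_mk.measurable hu.stronglyMeasurable_mk.measurable
  set A : Set Ω := {ω | vm ω ≤ um ω}
  set χ : Ω →ₘ[P] K := chi P K hA with hχdef
  set χ' : Ω →ₘ[P] K := 1 - chi P K hA with hχ'def
  have hχc : ⇑χ =ᵐ[P] A.indicator fun _ => (1 : K) := coeFn_chi hA
  have hχ'c : ⇑χ' =ᵐ[P] fun ω => 1 - A.indicator (fun _ => (1 : K)) ω := by
    filter_upwards [AEEqFun.coeFn_sub (1 : Ω →ₘ[P] K) χ, AEEqFun.coeFn_one (β := K) (μ := P),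
      hχc] with ω h1 h2 h3
    rw [hχdef] at h1 h3
    simp only [hχ'def, h1, Pi.sub_apply, h2, Pi.one_apply, h3]
  refine ⟨χ • a + χ' • b, ?_, ?_⟩
  · filter_upwards [S.hn₁tri (χ • a) (χ' • b), S.hn₁hom χ a, S.hn₁hom χ' b, hχc, hχ'c,
      S.hn₁pos a, S.hn₁pos b] with ω h1 h2 h3 h4 h5 h6 h7
    refine h1.trans ?_
    rw [h2, h3, h4, h5]
    by_cases hω : ω ∈ A
    · rw [Set.indicator_of_mem hω]
      simp only [norm_one, one_mul, sub_self, norm_zero, zero_mul, add_zero]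
      exact le_max_left _ _
    · rw [Set.indicator_of_notMem hω]
      simp only [norm_zero, zero_mul, sub_zero, norm_one, one_mul, zero_add]
      exact le_max_right _ _
  · have hTz : S.T (χ • a + χ' • b) = χ • S.T a + χ' • S.T b := by
      rw [S.hT_add, Hhom, Hhom]
    have e1 : χ • S.T (χ • a + χ' • b) = χ • S.T a := by
      rw [hTz, S.hmod₂a, ← S.hmod₂c, ← S.hmod₂c, hχdef, hχ'def, chi_mul_chi, chi_mul_compl,
        S.zero_smul₂, add_zero]
    have e2 : χ' • S.T (χ • a + χ' • b) = χ' • S.T b := by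
      rw [hTz, S.hmod₂a, ← S.hmod₂c, ← S.hmod₂c, hχdef, hχ'def, mul_comm ((1 : Ω →ₘ[P] K) -
        chi P K hA) (chi P K hA), chi_mul_compl, chi_compl_mul_compl, S.zero_smul₂, zero_add]
    filter_upwards [S.hn₂hom χ (S.T (χ • a + χ' • b)), S.hn₂hom χ' (S.T (χ • a + χ' • b)),
      S.hn₂hom χ (S.T a), S.hn₂hom χ' (S.T b), hχc, hχ'c, hueq, hveq] with ω k1 k2 k3 k4 k5 k6
      k7 k8
    have q1 : S.n₂ (χ • S.T (χ • a + χ' • b)) ω = S.n₂ (χ • S.T a) ω := by rw [e1]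
    have q2 : S.n₂ (χ' • S.T (χ • a + χ' • b)) ω = S.n₂ (χ' • S.T b) ω := by rw [e2]
    rw [k1, k3] at q1
    rw [k2, k4] at q2
    by_cases hω : ω ∈ A
    · rw [k5, Set.indicator_of_mem hω, norm_one, one_mul, one_mul] at q1
      rw [q1]
      exact (max_eq_left (by rw [k7, k8]; exact hω)).symm
    · rw [k6, Set.indicator_of_notMem hω, sub_zero, norm_one, one_mul, one_mul] at q2
      rw [q2]
      refine (max_eq_right ?_).symm
      rw [k7, k8]
      exact (not_le.mp hω).le


/-- Construction of the approximating sequence for the essential supremum of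
`{‖Tx‖₂ : ‖x‖₁ ≤ 1}`. -/
theorem key (S : RNS Ω K E₁ E₂ P)
    (Hhom : ∀ (c : Ω →ₘ[P] K) (x : E₁), S.T (c • x) = c • S.T x) :
    ∃ (y : ℕ → E₁) (U : ℕ → Ω → ℝ),
      (∀ n, ∀ᵐ ω ∂P, S.n₁ (y n) ω ≤ 1) ∧
      (∀ n, Measurable (U n)) ∧
      (∀ ω, Monotone fun n => U n ω) ∧
      (∀ n ω, 0 ≤ U n ω) ∧
      (∀ n, (fun ω => U n ω) =ᵐ[P] ⇑(S.n₂ (S.T (y n)))) ∧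
      ((∀ᵐ ω ∂P, (⨆ n, ENNReal.ofReal (U n ω)) ≠ ∞) →
        ∀ x : E₁, (∀ᵐ ω ∂P, S.n₁ x ω ≤ 1) →
          ∀ᵐ ω ∂P, S.n₂ (S.T x) ω ≤ (⨆ n, ENNReal.ofReal (U n ω)).toReal) := by
  classical
  -- the functional `I`
  set I : E₁ → ℝ := fun a => ∫ ω, Real.arctan (S.n₂ (S.T a) ω) ∂P with hIdef
  have harctan_bdd : ∀ t : ℝ, ‖Real.arctan t‖ ≤ Real.pi / 2 := fun t => by
    rw [Real.norm_eq_abs]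
    exact abs_le.mpr ⟨(Real.neg_pi_div_two_lt_arctan _).le, (Real.arctan_lt_pi_div_two _).le⟩
  have hInt : ∀ a : E₁, Integrable (fun ω => Real.arctan (S.n₂ (S.T a) ω)) P := by
    intro a
    refine Integrable.mono' (integrable_const (Real.pi / 2)) ?_
      (Eventually.of_forall fun ω => harctan_bdd _)
    exact Real.continuous_arctan.comp_aestronglyMeasurable (S.n₂ (S.T a)).aestronglyMeasurable
  have hImono : ∀ a b : E₁, (⇑(S.n₂ (S.T a)) ≤ᵐ[P] ⇑(S.n₂ (S.T b))) → I a ≤ I b := by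
    intro a b h
    refine integral_mono_ae (hInt a) (hInt b) ?_
    filter_upwards [h] with ω h
    exact Real.arctan_strictMono.monotone h
  have hIle : ∀ a : E₁, I a ≤ Real.pi / 2 := by
    intro a
    have := integral_mono_ae (hInt a) (integrable_const (Real.pi / 2))
      (Eventually.of_forall fun ω => (Real.arctan_lt_pi_div_two _).le)
    simpa [integral_const] using this
  -- the supremum `s` over the unit ball
  haveI hne : Nonempty {a : E₁ // ∀ᵐ ω ∂P, S.n₁ a ω ≤ 1} := by
    refine ⟨⟨0, ?_⟩⟩
    filter_upwards [S.n₁_zero] with ω h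
    rw [h]
    norm_num
  set s : ℝ := ⨆ a : {a : E₁ // ∀ᵐ ω ∂P, S.n₁ a ω ≤ 1}, I a.1 with hsdef
  have hbdd : BddAbove (Set.range fun a : {a : E₁ // ∀ᵐ ω ∂P, S.n₁ a ω ≤ 1} => I a.1) := by
    refine ⟨Real.pi / 2, ?_⟩
    rintro r ⟨a, rfl⟩
    exact hIle _
  have hsle : ∀ a : {a : E₁ // ∀ᵐ ω ∂P, S.n₁ a ω ≤ 1}, I a.1 ≤ s := fun a => le_ciSup hbdd a
  have hxs : ∀ n : ℕ, ∃ a : {a : E₁ // ∀ᵐ ω ∂P, S.n₁ a ω ≤ 1},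
      s - 1 / (n + 1) < I a.1 := by
    intro n
    refine exists_lt_of_lt_ciSup ?_
    have : (0 : ℝ) < 1 / (n + 1) := by positivity
    rw [← hsdef]
    linarith
  choose xs hxslt using hxs
  choose Z hZ1 hZ2 using S.glue Hhom
  -- the recursive gluing sequence
  set y : ℕ → E₁ := fun n => Nat.rec (xs 0).1 (fun n yn => Z yn (xs (n + 1)).1) n with hydef
  have hysucc : ∀ n, y (n + 1) = Z (y n) (xs (n + 1)).1 := fun n => rfl
  have hyball : ∀ n, ∀ᵐ ω ∂P, S.n₁ (y n) ω ≤ 1 := by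
    intro n
    induction n with
    | zero => exact (xs 0).2
    | succ n ih =>
      rw [hysucc n]
      filter_upwards [hZ1 (y n) (xs (n + 1)).1, ih, (xs (n + 1)).2] with ω h1 h2 h3
      exact h1.trans (max_le h2 h3)
  have hymax : ∀ n, ∀ᵐ ω ∂P, S.n₂ (S.T (y (n + 1))) ω
      = max (S.n₂ (S.T (y n)) ω) (S.n₂ (S.T (xs (n + 1)).1) ω) := by
    intro n
    rw [hysucc n]
    exact hZ2 (y n) (xs (n + 1)).1
  -- measurable representatives, made monotone and nonnegative
  have hrep : ∀ n, ∃ f : Ω → ℝ, Measurable f ∧ ⇑(S.n₂ (S.T (y n))) =ᵐ[P] f := fun n =>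
    ⟨(S.n₂ (S.T (y n))).aestronglyMeasurable.mk _,
      (S.n₂ (S.T (y n))).aestronglyMeasurable.stronglyMeasurable_mk.measurable,
      (S.n₂ (S.T (y n))).aestronglyMeasurable.ae_eq_mk⟩
  choose u humeas hueq using hrep
  set U : ℕ → Ω → ℝ := fun n ω => max 0 ((Finset.range (n + 1)).sup'
    (Finset.nonempty_range_add_one) fun k => u k ω) with hUdef
  have hUmeas : ∀ n, Measurable (U n) := by
    intro n
    have h := Finset.measurable_sup' (s := Finset.range (n + 1)) Finset.nonempty_range_add_one
      (f := u) (fun k _ => humeas k)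
    have h2 : (fun ω => (Finset.range (n + 1)).sup' Finset.nonempty_range_add_one fun k => u k ω)
        = ((Finset.range (n + 1)).sup' Finset.nonempty_range_add_one u : Ω → ℝ) := by
      funext ω
      exact (Finset.sup'_apply _ _ _).symm
    exact measurable_const.max (h2 ▸ h)
  have hUmono : ∀ ω, Monotone fun n => U n ω := by
    intro ω i j hij
    refine max_le_max le_rfl ?_
    exact Finset.sup'_mono _ (Finset.range_subset_range.mpr (by omega)) Finset.nonempty_range_add_one
  have hU0 : ∀ n ω, 0 ≤ U n ω := fun n ω => le_max_left _ _
  have hUeq : ∀ n, (fun ω => U n ω) =ᵐ[P] ⇑(S.n₂ (S.T (y n))) := by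
    intro n
    filter_upwards [ae_all_iff.mpr hueq, ae_all_iff.mpr hymax,
      ae_all_iff.mpr fun k => S.hn₂pos (S.T (y k))] with ω h1 h2 h3
    have hmono' : Monotone fun k => S.n₂ (S.T (y k)) ω := by
      refine monotone_nat_of_le_succ fun k => ?_
      rw [h2 k]
      exact le_max_left _ _
    have hchain : ∀ k, k ≤ n → u k ω ≤ u n ω := by
      intro k hk
      rw [← h1 k, ← h1 n]
      exact hmono' hk
    have hsup : (Finset.range (n + 1)).sup' Finset.nonempty_range_add_one (fun k => u k ω)
        = u n ω := by
      refine le_antisymm (Finset.sup'_le _ _ fun k hk =>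
        hchain k (Nat.lt_succ_iff.mp (Finset.mem_range.mp hk))) ?_
      exact Finset.le_sup' (fun k => u k ω) (Finset.self_mem_range_succ n)
    show max 0 ((Finset.range (n + 1)).sup' Finset.nonempty_range_add_one fun k => u k ω)
      = S.n₂ (S.T (y n)) ω
    rw [hsup, ← h1 n, max_eq_right]
    rw [h1 n] at *
    exact (h1 n) ▸ (h3 n)
  refine ⟨y, U, hyball, hUmeas, hUmono, hU0, hUeq, ?_⟩
  -- the least upper bound property, assuming a.e. finiteness
  intro hfin x hx
  set g : Ω → ℝ≥0∞ := fun ω => ⨆ n, ENNReal.ofReal (U n ω) with hgdef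
  set G : Ω → ℝ := fun ω => (g ω).toReal with hGdef
  have hGmeas : Measurable G :=
    (ENNReal.measurable_toReal).comp (Measurable.iSup fun n =>
      ENNReal.measurable_ofReal.comp (hUmeas n))
  have htendG : ∀ᵐ ω ∂P, Tendsto (fun n => U n ω) atTop (𝓝 (G ω)) := by
    filter_upwards [hfin] with ω hω
    have hmono : Monotone fun n => ENNReal.ofReal (U n ω) := fun i j hij =>
      ENNReal.ofReal_le_ofReal (hUmono ω hij)
    have h1 : Tendsto (fun n => ENNReal.ofReal (U n ω)) atTop (𝓝 (g ω)) :=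
      tendsto_atTop_iSup hmono
    have h2 := (ENNReal.tendsto_toReal hω).comp h1
    have h2' : Tendsto (fun n => (ENNReal.ofReal (U n ω)).toReal) atTop (𝓝 (G ω)) := h2
    have h3 : (fun n => (ENNReal.ofReal (U n ω)).toReal) = fun n => U n ω :=
      funext fun n => ENNReal.toReal_ofReal (hU0 n ω)
    rwa [h3] at h2'
  -- `I (y n) → s`
  have hIy_le : ∀ n, I (y n) ≤ s := fun n => hsle ⟨y n, hyball n⟩
  have hIy_lt : ∀ n, s - 1 / (n + 1) < I (y n) := by
    intro n
    refine lt_of_lt_of_le (hxslt n) ?_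
    cases n with
    | zero => exact le_rfl
    | succ n =>
      refine hImono _ _ ?_
      filter_upwards [hymax n] with ω h
      rw [h]
      exact le_max_right _ _
  have hIy : Tendsto (fun n => I (y n)) atTop (𝓝 s) := by
    have hlow : Tendsto (fun n : ℕ => s - 1 / (n + 1)) atTop (𝓝 s) := by
      have := tendsto_one_div_add_atTop_nhds_zero_nat (𝕜 := ℝ)
      have h2 := (tendsto_const_nhds (x := s) (f := atTop (α := ℕ))).sub this
      simpa using h2
    exact tendsto_of_tendsto_of_tendsto_of_le_of_le hlow tendsto_const_nhds
      (fun n => (hIy_lt n).le) hIy_le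
  -- `∫ arctan G = s` by dominated convergence
  have hintG : Integrable (fun ω => Real.arctan (G ω)) P := by
    refine Integrable.mono' (integrable_const (Real.pi / 2)) ?_
      (Eventually.of_forall fun ω => harctan_bdd _)
    exact (Real.continuous_arctan.comp_aestronglyMeasurable
      hGmeas.aestronglyMeasurable)
  have hdc1 : Tendsto (fun n => ∫ ω, Real.arctan (U n ω) ∂P) atTop
      (𝓝 (∫ ω, Real.arctan (G ω) ∂P)) := by
    refine tendsto_integral_of_dominated_convergence (fun _ => Real.pi / 2)
      (fun n => Real.continuous_arctan.comp_aestronglyMeasurable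
        (hUmeas n).aestronglyMeasurable)
      (integrable_const _) (fun n => Eventually.of_forall fun ω => harctan_bdd _) ?_
    filter_upwards [htendG] with ω hω
    exact (Real.continuous_arctan.tendsto _).comp hω
  have hIU : ∀ n, ∫ ω, Real.arctan (U n ω) ∂P = I (y n) := by
    intro n
    refine integral_congr_ae ?_
    filter_upwards [hUeq n] with ω h
    rw [h]
  have hGs : ∫ ω, Real.arctan (G ω) ∂P = s := by
    have h1 : Tendsto (fun n => I (y n)) atTop (𝓝 (∫ ω, Real.arctan (G ω) ∂P)) := by
      have := hdc1
      rw [funext hIU] at this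
      exact this
    exact tendsto_nhds_unique h1 hIy
  -- the glued sequence with `x`
  set v : Ω → ℝ := ⇑(S.n₂ (S.T x)) with hvdef
  have hwball : ∀ n, ∀ᵐ ω ∂P, S.n₁ (Z (y n) x) ω ≤ 1 := by
    intro n
    filter_upwards [hZ1 (y n) x, hyball n, hx] with ω h1 h2 h3
    exact h1.trans (max_le h2 h3)
  have hws : ∀ n, I (Z (y n) x) ≤ s := fun n => hsle ⟨Z (y n) x, hwball n⟩
  have hIw_eq : ∀ n, I (Z (y n) x) = ∫ ω, Real.arctan (max (U n ω) (v ω)) ∂P := by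
    intro n
    refine integral_congr_ae ?_
    filter_upwards [hZ2 (y n) x, hUeq n] with ω h1 h2
    rw [h1, h2]
  have hdc2 : Tendsto (fun n => ∫ ω, Real.arctan (max (U n ω) (v ω)) ∂P) atTop
      (𝓝 (∫ ω, Real.arctan (max (G ω) (v ω)) ∂P)) := by
    refine tendsto_integral_of_dominated_convergence (fun _ => Real.pi / 2)
      (fun n => Real.continuous_arctan.comp_aestronglyMeasurable
        (((hUmeas n).aestronglyMeasurable).sup (S.n₂ (S.T x)).aestronglyMeasurable))
      (integrable_const _) (fun n => Eventually.of_forall fun ω => harctan_bdd _) ?_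
    filter_upwards [htendG] with ω hω
    exact (Real.continuous_arctan.tendsto _).comp (hω.max tendsto_const_nhds)
  have hintMax : Integrable (fun ω => Real.arctan (max (G ω) (v ω))) P := by
    refine Integrable.mono' (integrable_const (Real.pi / 2)) ?_
      (Eventually.of_forall fun ω => harctan_bdd _)
    exact Real.continuous_arctan.comp_aestronglyMeasurable
      (hGmeas.aestronglyMeasurable.sup (S.n₂ (S.T x)).aestronglyMeasurable)
  have hlim2 : ∫ ω, Real.arctan (max (G ω) (v ω)) ∂P ≤ s := by
    refine le_of_tendsto' hdc2 fun n => ?_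
    rw [← hIw_eq n]
    exact hws n
  have hdiff0 : 0 ≤ᵐ[P] fun ω => Real.arctan (max (G ω) (v ω)) - Real.arctan (G ω) := by
    refine Eventually.of_forall fun ω => ?_
    simp only [Pi.zero_apply, sub_nonneg]
    exact Real.arctan_strictMono.monotone (le_max_left _ _)
  have hdiff_int : Integrable (fun ω => Real.arctan (max (G ω) (v ω)) - Real.arctan (G ω)) P :=
    hintMax.sub hintG
  have hdiff_eq : ∫ ω, (Real.arctan (max (G ω) (v ω)) - Real.arctan (G ω)) ∂P = 0 := by
    rw [integral_sub hintMax hintG]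
    have h1 := integral_nonneg_of_ae hdiff0
    rw [integral_sub hintMax hintG] at h1
    linarith [hlim2, hGs.le, hGs.ge]
  have hae0 : (fun ω => Real.arctan (max (G ω) (v ω)) - Real.arctan (G ω)) =ᵐ[P] 0 :=
    (integral_eq_zero_iff_of_nonneg_ae hdiff0 hdiff_int).mp hdiff_eq
  filter_upwards [hae0] with ω h
  simp only [Pi.zero_apply, sub_eq_zero] at h
  have := Real.arctan_injective h
  exact max_eq_left_iff.mp this


/-- Existence of the minimal a.s. bound, given that the image of the unit ball is a.s. bounded. -/
theorem exists_opNorm (S : RNS Ω K E₁ E₂ P)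
    (Hhom : ∀ (c : Ω →ₘ[P] K) (x : E₁), S.T (c • x) = c • S.T x)
    (Hfin : ∃ η : Ω →ₘ[P] ℝ, (∀ᵐ ω ∂P, 0 ≤ η ω) ∧
      ∀ x, (∀ᵐ ω ∂P, S.n₁ x ω ≤ 1) → ∀ᵐ ω ∂P, S.n₂ (S.T x) ω ≤ η ω) :
    ∃ ξT : Ω →ₘ[P] ℝ, (∀ᵐ ω ∂P, 0 ≤ ξT ω)
      ∧ (∀ x, ∀ᵐ ω ∂P, S.n₂ (S.T x) ω ≤ ξT ω * S.n₁ x ω)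
      ∧ (∀ η : Ω →ₘ[P] ℝ, (∀ᵐ ω ∂P, 0 ≤ η ω) →
          (∀ x, ∀ᵐ ω ∂P, S.n₂ (S.T x) ω ≤ η ω * S.n₁ x ω) → ∀ᵐ ω ∂P, ξT ω ≤ η ω)
      ∧ (∀ x, (∀ᵐ ω ∂P, S.n₁ x ω ≤ 1) → ∀ᵐ ω ∂P, S.n₂ (S.T x) ω ≤ ξT ω)
      ∧ (∀ η : Ω →ₘ[P] ℝ, (∀ᵐ ω ∂P, 0 ≤ η ω) →
          (∀ x, (∀ᵐ ω ∂P, S.n₁ x ω ≤ 1) → ∀ᵐ ω ∂P, S.n₂ (S.T x) ω ≤ η ω) →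
          ∀ᵐ ω ∂P, ξT ω ≤ η ω) := by
  obtain ⟨y, U, hyball, hUmeas, hUmono, hU0, hUeq, hubp⟩ := S.key Hhom
  obtain ⟨η₀, hη₀0, hη₀ub⟩ := Hfin
  set g : Ω → ℝ≥0∞ := fun ω => ⨆ n, ENNReal.ofReal (U n ω) with hgdef
  set G : Ω → ℝ := fun ω => (g ω).toReal with hGdef
  have hGmeas : Measurable G :=
    (ENNReal.measurable_toReal).comp (Measurable.iSup fun n =>
      ENNReal.measurable_ofReal.comp (hUmeas n))
  have hfin : ∀ᵐ ω ∂P, g ω ≠ ∞ := by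
    have hUη : ∀ n, ∀ᵐ ω ∂P, U n ω ≤ η₀ ω := by
      intro n
      filter_upwards [hUeq n, hη₀ub (y n) (hyball n)] with ω h1 h2
      rw [show U n ω = S.n₂ (S.T (y n)) ω from h1]
      exact h2
    filter_upwards [ae_all_iff.mpr hUη] with ω h
    exact ne_top_of_le_ne_top (ENNReal.ofReal_ne_top (r := η₀ ω))
      (iSup_le fun n => ENNReal.ofReal_le_ofReal (h n))
  have htendG : ∀ᵐ ω ∂P, Tendsto (fun n => U n ω) atTop (𝓝 (G ω)) := by
    filter_upwards [hfin] with ω hω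
    have hmono : Monotone fun n => ENNReal.ofReal (U n ω) := fun i j hij =>
      ENNReal.ofReal_le_ofReal (hUmono ω hij)
    have h1 : Tendsto (fun n => ENNReal.ofReal (U n ω)) atTop (𝓝 (g ω)) :=
      tendsto_atTop_iSup hmono
    have h2 := (ENNReal.tendsto_toReal hω).comp h1
    have h2' : Tendsto (fun n => (ENNReal.ofReal (U n ω)).toReal) atTop (𝓝 (G ω)) := h2
    have h3 : (fun n => (ENNReal.ofReal (U n ω)).toReal) = fun n => U n ω :=
      funext fun n => ENNReal.toReal_ofReal (hU0 n ω)
    rwa [h3] at h2'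
  set ξT : Ω →ₘ[P] ℝ := AEEqFun.mk G hGmeas.aestronglyMeasurable with hξTdef
  have hcoe : ⇑ξT =ᵐ[P] G := AEEqFun.coeFn_mk _ _
  -- nonnegativity
  have prop1 : ∀ᵐ ω ∂P, 0 ≤ ξT ω := by
    filter_upwards [hcoe] with ω h
    rw [h]
    exact ENNReal.toReal_nonneg
  -- upper bound on the unit ball
  have prop4 : ∀ x, (∀ᵐ ω ∂P, S.n₁ x ω ≤ 1) → ∀ᵐ ω ∂P, S.n₂ (S.T x) ω ≤ ξT ω := by
    intro x hx
    filter_upwards [hubp hfin x hx, hcoe] with ω h1 h2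
    rw [h2]
    exact h1
  -- least upper bound on the unit ball
  have prop5 : ∀ η : Ω →ₘ[P] ℝ, (∀ᵐ ω ∂P, 0 ≤ η ω) →
      (∀ x, (∀ᵐ ω ∂P, S.n₁ x ω ≤ 1) → ∀ᵐ ω ∂P, S.n₂ (S.T x) ω ≤ η ω) →
      ∀ᵐ ω ∂P, ξT ω ≤ η ω := by
    intro η hη0 hηub
    have hUη : ∀ n, ∀ᵐ ω ∂P, U n ω ≤ η ω := by
      intro n
      filter_upwards [hUeq n, hηub (y n) (hyball n)] with ω h1 h2
      rw [show U n ω = S.n₂ (S.T (y n)) ω from h1]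
      exact h2
    filter_upwards [htendG, ae_all_iff.mpr hUη, hcoe] with ω h1 h2 h3
    rw [h3]
    exact le_of_tendsto h1 (Eventually.of_forall h2)
  -- `ξT` is an a.s. bound, by the scaling argument
  have prop2 : ∀ x, ∀ᵐ ω ∂P, S.n₂ (S.T x) ω ≤ ξT ω * S.n₁ x ω := by
    intro x
    obtain ⟨wm, hwm_meas0, hweq0⟩ : ∃ f : Ω → ℝ, Measurable f ∧ ⇑(S.n₁ x) =ᵐ[P] f :=
      ⟨(S.n₁ x).aestronglyMeasurable.mk _,
        (S.n₁ x).aestronglyMeasurable.stronglyMeasurable_mk.measurable,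
        (S.n₁ x).aestronglyMeasurable.ae_eq_mk⟩
    set w : Ω → ℝ := fun ω => max (wm ω) 0 with hwdef
    have hwm_meas : Measurable w := hwm_meas0.max measurable_const
    have hw0 : ∀ ω, 0 ≤ w ω := fun ω => le_max_right _ _
    have hweq : ⇑(S.n₁ x) =ᵐ[P] w := by
      filter_upwards [hweq0, S.hn₁pos x] with ω h1 h2
      show S.n₁ x ω = max (wm ω) 0
      rw [← h1]
      exact (max_eq_left h2).symm
    have hscale : ∀ k : ℕ, ∀ᵐ ω ∂P, S.n₂ (S.T x) ω ≤ (w ω + 1 / (k + 1)) * ξT ω := by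
      intro k
      have hεk : (0 : ℝ) < 1 / (k + 1) := by positivity
      set c : Ω → K := fun ω => (((w ω + 1 / (k + 1))⁻¹ : ℝ) : K) with hcdef
      have hcmeas : Measurable c :=
        RCLike.measurable_ofReal.comp ((hwm_meas.add_const _).inv)
      set lam : Ω →ₘ[P] K := AEEqFun.mk c hcmeas.aestronglyMeasurable with hlamdef
      have hlamcoe : ⇑lam =ᵐ[P] c := AEEqFun.coeFn_mk _ _
      have hlamnorm : ∀ᵐ ω ∂P, ‖lam ω‖ = (w ω + 1 / (k + 1))⁻¹ := by
        filter_upwards [hlamcoe] with ω h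
        rw [h, hcdef, RCLike.norm_ofReal, abs_of_nonneg]
        positivity
      have hball : ∀ᵐ ω ∂P, S.n₁ (lam • x) ω ≤ 1 := by
        filter_upwards [S.hn₁hom lam x, hlamnorm, hweq] with ω h1 h2 h3
        rw [h1, h2, h3]
        have hpos : (0 : ℝ) < w ω + 1 / (k + 1) := by
          have := hw0 ω
          linarith
        calc (w ω + 1 / (k + 1))⁻¹ * w ω
            ≤ (w ω + 1 / (k + 1))⁻¹ * (w ω + 1 / (k + 1)) :=
              mul_le_mul_of_nonneg_left (by linarith) (inv_nonneg.mpr hpos.le)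
        _ = 1 := inv_mul_cancel₀ hpos.ne'
      have hub := prop4 (lam • x) hball
      filter_upwards [hub, S.hn₂hom lam (S.T x), hlamnorm, prop1, S.hn₂pos (S.T x)]
        with ω h1 h2 h3 h4 h5
      have hpos : (0 : ℝ) < w ω + 1 / (k + 1) := by
        have := hw0 ω
        linarith
      rw [show S.T (lam • x) = lam • S.T x from Hhom lam x, h2, h3] at h1
      calc S.n₂ (S.T x) ω = (w ω + 1 / (k + 1)) * ((w ω + 1 / (k + 1))⁻¹ * S.n₂ (S.T x) ω) := by
            rw [← mul_assoc, mul_inv_cancel₀ hpos.ne', one_mul]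
      _ ≤ (w ω + 1 / (k + 1)) * ξT ω := mul_le_mul_of_nonneg_left h1 hpos.le
    filter_upwards [ae_all_iff.mpr hscale, hweq, prop1] with ω h1 h2 h3
    have hlim : Tendsto (fun k : ℕ => (w ω + 1 / (k + 1)) * ξT ω) atTop
        (𝓝 (w ω * ξT ω)) := by
      have h4 := tendsto_one_div_add_atTop_nhds_zero_nat (𝕜 := ℝ)
      have h5 := ((tendsto_const_nhds (x := w ω) (f := atTop (α := ℕ))).add h4).mul_const
        (ξT ω)
      simpa using h5
    have h6 : S.n₂ (S.T x) ω ≤ w ω * ξT ω := ge_of_tendsto hlim (Eventually.of_forall h1)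
    rw [← h2] at h6
    rw [mul_comm] at h6
    exact h6
  -- minimality among a.s. bounds
  have prop3 : ∀ η : Ω →ₘ[P] ℝ, (∀ᵐ ω ∂P, 0 ≤ η ω) →
      (∀ x, ∀ᵐ ω ∂P, S.n₂ (S.T x) ω ≤ η ω * S.n₁ x ω) → ∀ᵐ ω ∂P, ξT ω ≤ η ω := by
    intro η hη0 hηb
    refine prop5 η hη0 fun x hx => ?_
    filter_upwards [hηb x, hx, hη0] with ω h1 h2 h3
    calc S.n₂ (S.T x) ω ≤ η ω * S.n₁ x ω := h1
    _ ≤ η ω * 1 := mul_le_mul_of_nonneg_left h2 h3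
    _ = η ω := mul_one _
  exact ⟨ξT, prop1, prop2, prop3, prop4, prop5⟩


/-- A continuous module homomorphism maps the unit ball into an a.s. bounded set. -/
theorem bound_of_cont (S : RNS Ω K E₁ E₂ P)
    (Hhom : ∀ (c : Ω →ₘ[P] K) (x : E₁), S.T (c • x) = c • S.T x)
    (Hcont : ∀ (x : ℕ → E₁) (x₀ : E₁),
      TendstoInMeasure P (fun n ω => S.n₁ (x n - x₀) ω) atTop (fun _ => (0 : ℝ)) →
      TendstoInMeasure P (fun n ω => S.n₂ (S.T (x n) - S.T x₀) ω) atTop (fun _ => (0 : ℝ))) :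
    ∃ η : Ω →ₘ[P] ℝ, (∀ᵐ ω ∂P, 0 ≤ η ω) ∧
      ∀ x, (∀ᵐ ω ∂P, S.n₁ x ω ≤ 1) → ∀ᵐ ω ∂P, S.n₂ (S.T x) ω ≤ η ω := by
  obtain ⟨y, U, hyball, hUmeas, hUmono, hU0, hUeq, hubp⟩ := S.key Hhom
  set g : Ω → ℝ≥0∞ := fun ω => ⨆ n, ENNReal.ofReal (U n ω) with hgdef
  set G : Ω → ℝ := fun ω => (g ω).toReal with hGdef
  have hgmeas : Measurable g := Measurable.iSup fun n =>
    ENNReal.measurable_ofReal.comp (hUmeas n)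
  have hGmeas : Measurable G := (ENNReal.measurable_toReal).comp hgmeas
  set A : Set Ω := {ω | g ω = ∞} with hAdef
  have hAmeas : MeasurableSet A := hgmeas (measurableSet_singleton ∞)
  -- on `A`, the sequence `U n` tends to infinity
  have hUnbdd : ∀ ω ∈ A, ∀ b : ℝ, ∃ n, b ≤ U n ω := by
    intro ω hω b
    by_contra hb
    push_neg at hb
    have hle : g ω ≤ ENNReal.ofReal b :=
      iSup_le fun n => ENNReal.ofReal_le_ofReal (hb n).le
    have hgω : g ω = ⊤ := hω
    rw [hgω] at hle
    exact ENNReal.ofReal_ne_top (top_le_iff.mp hle)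
  -- the truncated scaled sequence
  set c : ℕ → Ω → ℝ := fun n => A.indicator fun ω => (1 + U n ω)⁻¹ with hcdef
  have hc_meas : ∀ n, Measurable (c n) := fun n =>
    ((measurable_const.add (hUmeas n)).inv).indicator hAmeas
  have hc_nonneg : ∀ n ω, 0 ≤ c n ω := by
    intro n ω
    rw [hcdef]
    refine Set.indicator_nonneg (fun ω _ => ?_) ω
    have := hU0 n ω
    positivity
  set lam : ℕ → Ω →ₘ[P] K := fun n => AEEqFun.mk (fun ω => ((c n ω : ℝ) : K))
    ((RCLike.measurable_ofReal.comp (hc_meas n)).aestronglyMeasurable) with hlamdef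
  have hlamcoe : ∀ n, ⇑(lam n) =ᵐ[P] fun ω => ((c n ω : ℝ) : K) := fun n =>
    AEEqFun.coeFn_mk _ _
  set z : ℕ → E₁ := fun n => lam n • y n with hzdef
  have hz1 : ∀ n, ∀ᵐ ω ∂P, S.n₁ (z n) ω = c n ω * S.n₁ (y n) ω := by
    intro n
    filter_upwards [S.hn₁hom (lam n) (y n), hlamcoe n] with ω h1 h2
    rw [hzdef]
    simp only
    rw [h1, h2, RCLike.norm_ofReal, abs_of_nonneg (hc_nonneg n ω)]
  have hz2 : ∀ n, ∀ᵐ ω ∂P, S.n₂ (S.T (z n)) ω = c n ω * U n ω := by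
    intro n
    filter_upwards [S.hn₂hom (lam n) (S.T (y n)), hlamcoe n, hUeq n] with ω h1 h2 h3
    rw [hzdef]
    simp only
    rw [Hhom, h1, h2, RCLike.norm_ofReal, abs_of_nonneg (hc_nonneg n ω), ← h3]
  -- `n₁ (z n) → 0` a.e., hence in probability
  have hz_tend : ∀ᵐ ω ∂P, Tendsto (fun n => S.n₁ (z n - 0) ω) atTop (𝓝 0) := by
    filter_upwards [ae_all_iff.mpr hz1, ae_all_iff.mpr hyball,
      ae_all_iff.mpr fun n => S.hn₁pos (y n)] with ω h1 h2 h3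
    have hz1' : ∀ n, S.n₁ (z n - 0) ω = c n ω * S.n₁ (y n) ω := by
      intro n
      rw [sub_zero]
      exact h1 n
    by_cases hω : ω ∈ A
    · have hUtop : Tendsto (fun n => U n ω) atTop atTop :=
        tendsto_atTop_atTop_of_monotone (hUmono ω) (hUnbdd ω hω)
      have hinv : Tendsto (fun n => (1 + U n ω)⁻¹) atTop (𝓝 0) :=
        tendsto_inv_atTop_zero.comp (tendsto_atTop_add_const_left atTop 1 hUtop)
      refine tendsto_of_tendsto_of_tendsto_of_le_of_le tendsto_const_nhds hinv ?_ ?_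
      · intro n
        show (0:ℝ) ≤ S.n₁ (z n - 0) ω
        rw [hz1' n]
        exact mul_nonneg (hc_nonneg n ω) (h3 n)
      · intro n
        show S.n₁ (z n - 0) ω ≤ (1 + U n ω)⁻¹
        rw [hz1' n, hcdef]
        simp only [Set.indicator_of_mem hω]
        calc (1 + U n ω)⁻¹ * S.n₁ (y n) ω ≤ (1 + U n ω)⁻¹ * 1 := by
              refine mul_le_mul_of_nonneg_left (h2 n) ?_
              have := hU0 n ω
              positivity
        _ = (1 + U n ω)⁻¹ := mul_one _
    · have : ∀ n, S.n₁ (z n - 0) ω = 0 := by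
        intro n
        rw [hz1' n, hcdef]
        simp [Set.indicator_of_notMem hω]
      rw [funext this]
      exact tendsto_const_nhds
  have hzim : TendstoInMeasure P (fun n ω => S.n₁ (z n - 0) ω) atTop (fun _ => (0 : ℝ)) :=
    tendstoInMeasure_of_tendsto_ae (fun n => (S.n₁ (z n - 0)).aestronglyMeasurable) hz_tend
  have hTzim := Hcont z 0 hzim
  rw [S.T_zero] at hTzim
  have h1meas : Tendsto (fun n => P {ω | 1/2 ≤ dist (S.n₂ (S.T (z n) - 0) ω) ((fun _ => (0:ℝ)) ω)})
      atTop (𝓝 0) := (tendstoInMeasure_iff_dist.mp hTzim) (1/2) (by norm_num)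
  -- the exhausting sets
  set B : ℕ → Set Ω := fun n => A ∩ {ω | 1 ≤ U n ω} with hBdef
  have hBmono : Monotone B := by
    intro i j hij
    exact Set.inter_subset_inter le_rfl fun ω h => le_trans h (hUmono ω hij)
  have hBunion : (⋃ n, B n) = A := by
    ext ω
    simp only [Set.mem_iUnion, hBdef, Set.mem_inter_iff, Set.mem_setOf_eq]
    constructor
    · rintro ⟨n, hn, _⟩
      exact hn
    · intro hω
      obtain ⟨n, hn⟩ := hUnbdd ω hω 1
      exact ⟨n, hω, hn⟩
  have hBtend : Tendsto (fun n => P (B n)) atTop (𝓝 (P A)) := by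
    have := tendsto_measure_iUnion_atTop (μ := P) hBmono
    rwa [hBunion] at this
  have hPB_le : ∀ n, P (B n) ≤ P {ω | 1/2 ≤ dist (S.n₂ (S.T (z n) - 0) ω) ((fun _ => (0:ℝ)) ω)} := by
    intro n
    refine measure_mono_ae ?_
    filter_upwards [hz2 n, S.hn₂pos (S.T (z n))] with ω h1 h2 hmem
    have hmem' : ω ∈ A ∧ 1 ≤ U n ω := hmem
    obtain ⟨hA', hU1⟩ := hmem'
    have hpos : (0 : ℝ) < 1 + U n ω := by linarith
    have hval : S.n₂ (S.T (z n) - 0) ω = (1 + U n ω)⁻¹ * U n ω := by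
      rw [sub_zero, h1, hcdef]
      simp [Set.indicator_of_mem hA']
    show (1:ℝ)/2 ≤ dist (S.n₂ (S.T (z n) - 0) ω) 0
    rw [Real.dist_eq, sub_zero, hval, abs_of_nonneg (by positivity)]
    rw [inv_mul_eq_div, le_div_iff₀ hpos]
    linarith
  have hPA : P A = 0 := by
    have := le_of_tendsto_of_tendsto' hBtend h1meas hPB_le
    exact le_antisymm this zero_le
  have hfin : ∀ᵐ ω ∂P, g ω ≠ ∞ := by
    rw [ae_iff]
    convert hPA using 2
    ext ω
    simp [hAdef]
  refine ⟨AEEqFun.mk G hGmeas.aestronglyMeasurable, ?_, ?_⟩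
  · filter_upwards [AEEqFun.coeFn_mk G hGmeas.aestronglyMeasurable] with ω h
    rw [h]
    exact ENNReal.toReal_nonneg
  · intro x hx
    filter_upwards [hubp hfin x hx, AEEqFun.coeFn_mk G hGmeas.aestronglyMeasurable] with ω h1 h2
    rw [h2]
    exact h1

end RNS


/-- For RN modules `(E₁,n₁)`, `(E₂,n₂)` over `K` with base `(Ω,𝓕,P)` and a
`K`-linear operator `T : E₁ → E₂`: `T` is a.s. bounded iff `T` is an `L⁰(𝓕,K)`-module
homomorphism which is continuous for the `(ε,λ)`-topologies; moreover, in this case the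
a.e.-smallest a.s. bound `‖T‖` exists and is the a.e.-least upper bound of
`{‖Tx‖₂ : ‖x‖₁ ≤ 1}`. -/
theorem stmt0
    {Ω K E₁ E₂ : Type*} [MeasurableSpace Ω] {P : Measure Ω} [IsProbabilityMeasure P]
    [RCLike K]
    [AddCommGroup E₁] [SMul (Ω →ₘ[P] K) E₁]
    [AddCommGroup E₂] [SMul (Ω →ₘ[P] K) E₂]
    -- `E₁` is a left module over `L⁰(𝓕,K)`
    (hmod₁a : ∀ (ξ : Ω →ₘ[P] K) (x y : E₁), ξ • (x + y) = ξ • x + ξ • y)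
    (hmod₁b : ∀ (ξ η : Ω →ₘ[P] K) (x : E₁), (ξ + η) • x = ξ • x + η • x)
    (hmod₁c : ∀ (ξ η : Ω →ₘ[P] K) (x : E₁), (ξ * η) • x = ξ • (η • x))
    (hmod₁d : ∀ x : E₁, (1 : Ω →ₘ[P] K) • x = x)
    -- `E₂` is a left module over `L⁰(𝓕,K)`
    (hmod₂a : ∀ (ξ : Ω →ₘ[P] K) (x y : E₂), ξ • (x + y) = ξ • x + ξ • y)
    (hmod₂b : ∀ (ξ η : Ω →ₘ[P] K) (x : E₂), (ξ + η) • x = ξ • x + η • x)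
    (hmod₂c : ∀ (ξ η : Ω →ₘ[P] K) (x : E₂), (ξ * η) • x = ξ • (η • x))
    (hmod₂d : ∀ x : E₂, (1 : Ω →ₘ[P] K) • x = x)
    -- `n₁` is an `L⁰`-norm on `E₁`
    (n₁ : E₁ → Ω →ₘ[P] ℝ)
    (hn₁pos : ∀ x, ∀ᵐ ω ∂P, 0 ≤ n₁ x ω)
    (hn₁def : ∀ x, (∀ᵐ ω ∂P, n₁ x ω = 0) → x = 0)
    (hn₁tri : ∀ x y, ∀ᵐ ω ∂P, n₁ (x + y) ω ≤ n₁ x ω + n₁ y ω)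
    (hn₁hom : ∀ (ξ : Ω →ₘ[P] K) (x : E₁), ∀ᵐ ω ∂P, n₁ (ξ • x) ω = ‖ξ ω‖ * n₁ x ω)
    -- `n₂` is an `L⁰`-norm on `E₂`
    (n₂ : E₂ → Ω →ₘ[P] ℝ)
    (hn₂pos : ∀ x, ∀ᵐ ω ∂P, 0 ≤ n₂ x ω)
    (hn₂def : ∀ x, (∀ᵐ ω ∂P, n₂ x ω = 0) → x = 0)
    (hn₂tri : ∀ x y, ∀ᵐ ω ∂P, n₂ (x + y) ω ≤ n₂ x ω + n₂ y ω)
    (hn₂hom : ∀ (ξ : Ω →ₘ[P] K) (x : E₂), ∀ᵐ ω ∂P, n₂ (ξ • x) ω = ‖ξ ω‖ * n₂ x ω)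
    -- `T` is a `K`-linear operator
    (T : E₁ → E₂)
    (hT_add : ∀ x y, T (x + y) = T x + T y)
    (hT_smul : ∀ (c : K) (x : E₁),
      T ((AEEqFun.const Ω c : Ω →ₘ[P] K) • x) = (AEEqFun.const Ω c : Ω →ₘ[P] K) • T x) :
    -- conclusion
    ((∃ ξ : Ω →ₘ[P] ℝ, (∀ᵐ ω ∂P, 0 ≤ ξ ω) ∧ ∀ x, ∀ᵐ ω ∂P, n₂ (T x) ω ≤ ξ ω * n₁ x ω) ↔
      ((∀ (ξ : Ω →ₘ[P] K) (x : E₁), T (ξ • x) = ξ • T x) ∧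
        ∀ (x : ℕ → E₁) (x₀ : E₁),
          TendstoInMeasure P (fun n ω => n₁ (x n - x₀) ω) atTop (fun _ => (0 : ℝ)) →
          TendstoInMeasure P (fun n ω => n₂ (T (x n) - T x₀) ω) atTop (fun _ => (0 : ℝ))))
    ∧
    ((∃ ξ : Ω →ₘ[P] ℝ, (∀ᵐ ω ∂P, 0 ≤ ξ ω) ∧ ∀ x, ∀ᵐ ω ∂P, n₂ (T x) ω ≤ ξ ω * n₁ x ω) →
      ∃ ξT : Ω →ₘ[P] ℝ, (∀ᵐ ω ∂P, 0 ≤ ξT ω)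
        ∧ (∀ x, ∀ᵐ ω ∂P, n₂ (T x) ω ≤ ξT ω * n₁ x ω)
        ∧ (∀ η : Ω →ₘ[P] ℝ, (∀ᵐ ω ∂P, 0 ≤ η ω) →
            (∀ x, ∀ᵐ ω ∂P, n₂ (T x) ω ≤ η ω * n₁ x ω) → ∀ᵐ ω ∂P, ξT ω ≤ η ω)
        ∧ (∀ x, (∀ᵐ ω ∂P, n₁ x ω ≤ 1) → ∀ᵐ ω ∂P, n₂ (T x) ω ≤ ξT ω)
        ∧ (∀ η : Ω →ₘ[P] ℝ, (∀ᵐ ω ∂P, 0 ≤ η ω) →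
            (∀ x, (∀ᵐ ω ∂P, n₁ x ω ≤ 1) → ∀ᵐ ω ∂P, n₂ (T x) ω ≤ η ω) →
            ∀ᵐ ω ∂P, ξT ω ≤ η ω)) := by
  set S : RNS Ω K E₁ E₂ P :=
    { n₁ := n₁, n₂ := n₂, T := T, hmod₁a := hmod₁a, hmod₁b := hmod₁b, hmod₁c := hmod₁c,
      hmod₁d := hmod₁d, hmod₂a := hmod₂a, hmod₂b := hmod₂b, hmod₂c := hmod₂c,
      hmod₂d := hmod₂d, hn₁pos := hn₁pos, hn₁def := hn₁def, hn₁tri := hn₁tri,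
      hn₁hom := hn₁hom, hn₂pos := hn₂pos, hn₂def := hn₂def, hn₂tri := hn₂tri,
      hn₂hom := hn₂hom, hT_add := hT_add, hT_smul := hT_smul } with hS
  constructor
  · constructor
    · rintro ⟨ξ, hξ0, hξb⟩
      exact ⟨S.hom_of_bound hξ0 hξb, fun x x₀ h => S.cont_of_bound hξ0 hξb x x₀ h⟩
    · rintro ⟨Hhom, Hcont⟩
      obtain ⟨ξT, p1, p2, _, _, _⟩ := S.exists_opNorm Hhom (S.bound_of_cont Hhom Hcont)
      exact ⟨ξT, p1, p2⟩
  · rintro ⟨ξ, hξ0, hξb⟩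
    have Hhom := S.hom_of_bound hξ0 hξb
    refine S.exists_opNorm Hhom ⟨ξ, hξ0, fun x hx => ?_⟩
    filter_upwards [hξb x, hx, hξ0] with ω a b c
    calc n₂ (T x) ω ≤ ξ ω * n₁ x ω := a
    _ ≤ ξ ω * 1 := mul_le_mul_of_nonneg_left b c
    _ = ξ ω := mul_one _
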